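/- For every Schwartz function Ψ ∈ S(ℝ^d), every j ∈ {1,…,d} and all k, y ∈ ℝ^d, the Bloch–Floquet–Zak transform intertwines the position operator with i∂_k: (Z(x_j Ψ))(k,y) = i ∂_{k_j} (ZΨ)(k,y), where x_j Ψ denotes the function x ↦ x_j Ψ(x). -/

import Mathlib

open scoped BigOperators RealInnerProductSpace

noncomputable section

abbrev Ed (d : ℕ) := EuclideanSpace ℝ (Fin d)

/-- The lattice vector with integer coefficients `m` with respect to the basis `e`. -/
noncomputable def latVec {d : ℕ} (e : Fin d → Ed d) (m : Fin d → ℤ) : Ed d :=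
  ∑ j, (m j : ℝ) • e j

/-- The Bloch–Floquet–Zak transform `(ZΨ)(k,y) = ∑_{γ ∈ Γ} e^{-ik·(y+γ)} Ψ(y+γ)`. -/
noncomputable def zak {d : ℕ} (e : Fin d → Ed d) (Ψ : SchwartzMap (Ed d) ℂ)
    (k y : Ed d) : ℂ :=
  ∑' m : Fin d → ℤ,
    Complex.exp (-Complex.I * ((⟪k, y + latVec e m⟫ : ℝ) : ℂ)) * Ψ (y + latVec e m)

lemma summable_g : Summable (fun n : ℤ => ((1 + |(n : ℝ)|) ^ 2)⁻¹) := by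
  have h : Summable (fun n : ℤ => 1 / (n : ℝ) ^ 2) :=
    Real.summable_one_div_int_pow.mpr one_lt_two
  refine Summable.of_norm_bounded_eventually h ?_
  have hsub : {n : ℤ | ¬ ‖((1 + |(n : ℝ)|) ^ 2)⁻¹‖ ≤ 1 / (n : ℝ) ^ 2} ⊆ {0} := by
    intro n hn
    simp only [Set.mem_setOf_eq, not_le] at hn
    by_contra h0
    have hne : n ≠ 0 := by simpa using h0
    have hn1 : (1 : ℝ) ≤ |(n : ℝ)| := by
      have := Int.one_le_abs hne
      calc (1 : ℝ) = ((1 : ℤ) : ℝ) := by norm_num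
        _ ≤ ((|n| : ℤ) : ℝ) := by exact_mod_cast this
        _ = |(n : ℝ)| := by push_cast; ring
    have h1 : (n : ℝ) ^ 2 ≤ (1 + |(n : ℝ)|) ^ 2 := by
      rw [← sq_abs]
      apply pow_le_pow_left₀ (abs_nonneg _)
      linarith
    have h2 : (0 : ℝ) < (n : ℝ) ^ 2 := by positivity
    have h3 : ((1 + |(n : ℝ)|) ^ 2)⁻¹ ≤ 1 / (n : ℝ) ^ 2 := by
      rw [one_div]
      exact inv_anti₀ h2 h1
    have h4 : ‖((1 + |(n : ℝ)|) ^ 2)⁻¹‖ = ((1 + |(n : ℝ)|) ^ 2)⁻¹ := by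
      rw [Real.norm_eq_abs, abs_of_nonneg]; positivity
    rw [h4] at hn
    exact absurd h3 (not_le.mpr hn)
  exact ((Set.finite_singleton 0).subset hsub).eventually_cofinite_notMem.mono
    (fun n hn => not_not.mp (fun h => hn h))

lemma summable_prod_g (d : ℕ) :
    Summable (fun m : Fin d → ℤ => ∏ j, ((1 + |(m j : ℝ)|) ^ 2)⁻¹) := by
  induction d with
  | zero =>
      haveI : Unique (Fin 0 → ℤ) := ⟨⟨fun i => i.elim0⟩, fun f => funext fun i => i.elim0⟩
      exact Summable.of_finite
  | succ d ih =>
      have key : Summable (fun p : ℤ × (Fin d → ℤ) =>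
          ((1 + |(p.1 : ℝ)|) ^ 2)⁻¹ * ∏ j, ((1 + |(p.2 j : ℝ)|) ^ 2)⁻¹) :=
        Summable.mul_of_nonneg (f := fun n : ℤ => ((1 + |(n : ℝ)|) ^ 2)⁻¹)
          (g := fun m : Fin d → ℤ => ∏ j, ((1 + |(m j : ℝ)|) ^ 2)⁻¹) summable_g ih
          (fun n => by positivity) (fun m => Finset.prod_nonneg fun j _ => by positivity)
      rw [← (Fin.consEquiv (fun _ => ℤ)).summable_iff]
      refine key.congr fun p => ?_
      simp only [Function.comp]
      rw [Fin.prod_univ_succ]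
      simp [Fin.consEquiv]

lemma inv_le_inv_mul' {a b c : ℝ} (ha : 0 < a) (hb : 0 < b) (hc : 0 ≤ c) (h : a ≤ c * b) :
    b⁻¹ ≤ c * a⁻¹ := by
  rw [← div_eq_mul_inv, le_div_iff₀ ha, inv_mul_eq_div, div_le_iff₀ hb]
  linarith

lemma norm_latVec_coeff {d : ℕ} (b : Module.Basis (Fin d) ℝ (Ed d)) (m : Fin d → ℤ) (j : Fin d) :
    |(m j : ℝ)| ≤ ‖b.equivFunL.toContinuousLinearMap‖ * ‖latVec (⇑b) m‖ := by
  have h1 : b.equivFun (latVec (⇑b) m) = fun j => (m j : ℝ) := by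
    have h : latVec (⇑b) m = b.equivFun.symm (fun j => (m j : ℝ)) := by
      rw [Module.Basis.equivFun_symm_apply]; rfl
    rw [h, LinearEquiv.apply_symm_apply]
  have h2 : |(m j : ℝ)| ≤ ‖b.equivFun (latVec (⇑b) m)‖ := by
    rw [h1]
    exact (norm_le_pi_norm (fun j => (m j : ℝ)) j).trans_eq' (Real.norm_eq_abs _).symm
  exact h2.trans (b.equivFunL.toContinuousLinearMap.le_opNorm _)

/-- Key summability lemma: lattice sums of Schwartz functions (with one extra power) converge. -/
lemma summable_main {d : ℕ} (b : Module.Basis (Fin d) ℝ (Ed d)) (Ψ : SchwartzMap (Ed d) ℂ) (y : Ed d) :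
    Summable (fun m : Fin d → ℤ =>
      (1 + ‖y + latVec (⇑b) m‖) * ‖Ψ (y + latVec (⇑b) m)‖) := by
  set K : ℝ := max 1 ‖b.equivFunL.toContinuousLinearMap‖ with hK
  have hK1 : (1 : ℝ) ≤ K := le_max_left _ _
  have hK0 : (0 : ℝ) < K := lt_of_lt_of_le one_pos hK1
  set C : ℝ := 2 ^ (2 * d + 1) *
    (Finset.Iic (2 * d + 1, 0)).sup (fun p => SchwartzMap.seminorm ℝ p.1 p.2) Ψ with hC
  have hC0 : 0 ≤ C := mul_nonneg (by positivity) (apply_nonneg _ _)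
  have hbound : ∀ m : Fin d → ℤ,
      (1 + ‖y + latVec (⇑b) m‖) * ‖Ψ (y + latVec (⇑b) m)‖ ≤
        (C * (1 + ‖y‖) ^ (2 * d) * K ^ (2 * d)) * ∏ j, ((1 + |(m j : ℝ)|) ^ 2)⁻¹ := by
    intro m
    set γ := latVec (⇑b) m with hγ
    set x := y + γ with hx
    have hx1 : (0 : ℝ) < 1 + ‖x‖ := by positivity
    have hγ1 : (0 : ℝ) < 1 + ‖γ‖ := by positivity
    have hdecay : (1 + ‖x‖) ^ (2 * d + 1) * ‖Ψ x‖ ≤ C := by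
      have := SchwartzMap.one_add_le_sup_seminorm_apply (𝕜 := ℝ)
        (m := (2 * d + 1, 0)) (k := 2 * d + 1) (n := 0) le_rfl le_rfl Ψ x
      rwa [norm_iteratedFDeriv_zero] at this
    have step1 : (1 + ‖x‖) * ‖Ψ x‖ ≤ C * ((1 + ‖x‖) ^ (2 * d))⁻¹ := by
      rw [← div_eq_mul_inv, le_div_iff₀ (by positivity)]
      calc (1 + ‖x‖) * ‖Ψ x‖ * (1 + ‖x‖) ^ (2 * d)
          = (1 + ‖x‖) ^ (2 * d + 1) * ‖Ψ x‖ := by ring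
        _ ≤ C := hdecay
    have hcomp : 1 + ‖γ‖ ≤ (1 + ‖y‖) * (1 + ‖x‖) := by
      have hle : ‖γ‖ ≤ ‖y‖ + ‖x‖ := by
        calc ‖γ‖ = ‖x - y‖ := by rw [hx, add_sub_cancel_left]
          _ ≤ ‖x‖ + ‖y‖ := norm_sub_le _ _
          _ = ‖y‖ + ‖x‖ := by ring
      nlinarith [norm_nonneg y, norm_nonneg x]
    have hcoeff : ∀ j, 1 + |(m j : ℝ)| ≤ K * (1 + ‖γ‖) := by
      intro j
      have h1 := norm_latVec_coeff b m j
      have hKb : ‖b.equivFunL.toContinuousLinearMap‖ ≤ K := le_max_right _ _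
      have h2 : |(m j : ℝ)| ≤ K * ‖γ‖ :=
        h1.trans (mul_le_mul_of_nonneg_right hKb (norm_nonneg _))
      nlinarith [norm_nonneg γ]
    have hprod : ∏ j, (1 + |(m j : ℝ)|) ^ 2 ≤ K ^ (2 * d) * (1 + ‖γ‖) ^ (2 * d) := by
      have h1 : ∏ j : Fin d, (1 + |(m j : ℝ)|) ^ 2 ≤ ∏ j : Fin d, (K * (1 + ‖γ‖)) ^ 2 :=
        Finset.prod_le_prod (fun j _ => by positivity)
          (fun j _ => pow_le_pow_left₀ (by positivity) (hcoeff j) 2)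
      calc ∏ j : Fin d, (1 + |(m j : ℝ)|) ^ 2 ≤ ∏ j : Fin d, (K * (1 + ‖γ‖)) ^ 2 := h1
        _ = (K * (1 + ‖γ‖)) ^ (2 * d) := by
            rw [Finset.prod_const, Finset.card_univ, Fintype.card_fin, ← pow_mul]
        _ = K ^ (2 * d) * (1 + ‖γ‖) ^ (2 * d) := mul_pow _ _ _
    have hPpos : (0 : ℝ) < ∏ j, (1 + |(m j : ℝ)|) ^ 2 :=
      Finset.prod_pos fun j _ => by positivity
    have hinv1 : ((1 + ‖x‖) ^ (2 * d))⁻¹ ≤ (1 + ‖y‖) ^ (2 * d) * ((1 + ‖γ‖) ^ (2 * d))⁻¹ := by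
      apply inv_le_inv_mul' (by positivity) (by positivity) (by positivity)
      calc (1 + ‖γ‖) ^ (2 * d) ≤ ((1 + ‖y‖) * (1 + ‖x‖)) ^ (2 * d) :=
            pow_le_pow_left₀ hγ1.le hcomp _
        _ = (1 + ‖y‖) ^ (2 * d) * (1 + ‖x‖) ^ (2 * d) := mul_pow _ _ _
    have hinv2 : ((1 + ‖γ‖) ^ (2 * d))⁻¹ ≤ K ^ (2 * d) * (∏ j, ((1 + |(m j : ℝ)|) ^ 2))⁻¹ := by
      apply inv_le_inv_mul' hPpos (by positivity) (by positivity)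
      exact hprod
    have hΨnn : (0 : ℝ) ≤ ‖Ψ x‖ := norm_nonneg _
    calc (1 + ‖x‖) * ‖Ψ x‖ ≤ C * ((1 + ‖x‖) ^ (2 * d))⁻¹ := step1
      _ ≤ C * ((1 + ‖y‖) ^ (2 * d) * ((1 + ‖γ‖) ^ (2 * d))⁻¹) :=
          mul_le_mul_of_nonneg_left hinv1 hC0
      _ ≤ C * ((1 + ‖y‖) ^ (2 * d) * (K ^ (2 * d) * (∏ j, ((1 + |(m j : ℝ)|) ^ 2))⁻¹)) := by
          apply mul_le_mul_of_nonneg_left _ hC0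
          exact mul_le_mul_of_nonneg_left hinv2 (by positivity)
      _ = (C * (1 + ‖y‖) ^ (2 * d) * K ^ (2 * d)) * (∏ j, ((1 + |(m j : ℝ)|) ^ 2))⁻¹ := by ring
      _ = (C * (1 + ‖y‖) ^ (2 * d) * K ^ (2 * d)) * ∏ j, ((1 + |(m j : ℝ)|) ^ 2)⁻¹ := by
          rw [← Finset.prod_inv_distrib]
  refine Summable.of_nonneg_of_le (fun m => by positivity) hbound ?_
  exact (summable_prod_g d).mul_left _

/-- The Bloch–Floquet–Zak transform intertwines the position operator with `i∂_k`:
if `Φ(x) = x_j Ψ(x)` then `(ZΦ)(k,y) = i ∂_{k_j}(ZΨ)(k,y)`. -/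
theorem zak_position {d : ℕ} (b : Module.Basis (Fin d) ℝ (Ed d))
    (Ψ Φ : SchwartzMap (Ed d) ℂ) (j : Fin d)
    (hΦ : ∀ x : Ed d, Φ x = ((x j : ℝ) : ℂ) * Ψ x)
    (k y : Ed d) :
    zak (⇑b) Φ k y
      = Complex.I * fderiv ℝ (fun k' => zak (⇑b) Ψ k' y) k (EuclideanSpace.single j 1) := by
  classical
  set w : Ed d := EuclideanSpace.single j 1 with hw
  set V : (Fin d → ℤ) → Ed d := fun m => y + latVec (⇑b) m with hV
  set F : (Fin d → ℤ) → Ed d → ℂ := fun m k' =>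
    Complex.exp (-Complex.I * ((⟪k', V m⟫ : ℝ) : ℂ)) * Ψ (V m) with hF
  set F' : (Fin d → ℤ) → Ed d → (Ed d →L[ℝ] ℂ) := fun m k' =>
    Ψ (V m) • (Complex.exp (-Complex.I * ((⟪k', V m⟫ : ℝ) : ℂ)) •
      ((-Complex.I) • (Complex.ofRealCLM.comp (innerSL ℝ (V m))))) with hF'
  set u : (Fin d → ℤ) → ℝ := fun m => (1 + ‖V m‖) * ‖Ψ (V m)‖ with hu_def
  have hu : Summable u := summable_main b Ψ y
  have hLfun : ∀ (m : Fin d → ℤ) (k'' : Ed d),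
      (Complex.ofRealCLM.comp (innerSL ℝ (V m))) k'' = ((⟪k'', V m⟫ : ℝ) : ℂ) := by
    intro m k''
    simp only [ContinuousLinearMap.coe_comp', Function.comp_apply, Complex.ofRealCLM_apply,
      innerSL_apply_apply]
    rw [real_inner_comm]
  have hexp_norm : ∀ (r : ℝ), ‖Complex.exp (-Complex.I * (r : ℂ))‖ = 1 := by
    intro r
    rw [Complex.norm_exp]
    simp
  have hL_norm : ∀ m, ‖Complex.ofRealCLM.comp (innerSL ℝ (V m))‖ ≤ ‖V m‖ := by
    intro m
    apply ContinuousLinearMap.opNorm_le_bound _ (norm_nonneg _)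
    intro x
    calc ‖(Complex.ofRealCLM.comp (innerSL ℝ (V m))) x‖ = |(⟪x, V m⟫ : ℝ)| := by
          rw [hLfun m x, Complex.norm_real, Real.norm_eq_abs]
      _ ≤ ‖x‖ * ‖V m‖ := abs_real_inner_le_norm x (V m)
      _ = ‖V m‖ * ‖x‖ := mul_comm _ _
  have hderiv : ∀ (m : Fin d → ℤ) (k' : Ed d), HasFDerivAt (F m) (F' m k') k' := by
    intro m k'
    have h0 : HasFDerivAt (fun k'' : Ed d => ((⟪k'', V m⟫ : ℝ) : ℂ))
        (Complex.ofRealCLM.comp (innerSL ℝ (V m))) k' := by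
      have h := (Complex.ofRealCLM.comp (innerSL ℝ (V m))).hasFDerivAt (x := k')
      exact h.congr_of_eventuallyEq
        (Filter.Eventually.of_forall fun k'' => (hLfun m k'').symm)
    have h1 : HasFDerivAt (fun k'' : Ed d => -Complex.I * ((⟪k'', V m⟫ : ℝ) : ℂ))
        ((-Complex.I) • (Complex.ofRealCLM.comp (innerSL ℝ (V m)))) k' := h0.const_mul _
    have h2 := h1.cexp
    have h3 : HasFDerivAt
        (fun k'' : Ed d => Ψ (V m) * Complex.exp (-Complex.I * ((⟪k'', V m⟫ : ℝ) : ℂ)))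
        (F' m k') k' := h2.const_mul _
    exact h3.congr_of_eventuallyEq (Filter.Eventually.of_forall fun k'' => mul_comm _ _)
  have hf'le : ∀ (m : Fin d → ℤ) (k' : Ed d), ‖F' m k'‖ ≤ u m := by
    intro m k'
    have step : ‖F' m k'‖
        ≤ ‖Ψ (V m)‖ * (‖Complex.exp (-Complex.I * ((⟪k', V m⟫ : ℝ) : ℂ))‖ *
            (‖-Complex.I‖ * ‖Complex.ofRealCLM.comp (innerSL ℝ (V m))‖)) := by
      simp only [hF']
      refine (norm_smul_le (Ψ (V m))
        (Complex.exp (-Complex.I * ((⟪k', V m⟫ : ℝ) : ℂ)) •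
          ((-Complex.I) • (Complex.ofRealCLM.comp (innerSL ℝ (V m)))))).trans ?_
      gcongr _ * ?_
      refine (norm_smul_le (Complex.exp (-Complex.I * ((⟪k', V m⟫ : ℝ) : ℂ)))
        ((-Complex.I) • (Complex.ofRealCLM.comp (innerSL ℝ (V m))))).trans ?_
      gcongr _ * ?_
      exact norm_smul_le (-Complex.I) (Complex.ofRealCLM.comp (innerSL ℝ (V m)))
    rw [hexp_norm] at step
    simp only [norm_neg, Complex.norm_I, one_mul] at step
    refine step.trans ?_
    simp only [hu_def]
    calc ‖Ψ (V m)‖ * ‖Complex.ofRealCLM.comp (innerSL ℝ (V m))‖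
        ≤ ‖Ψ (V m)‖ * ‖V m‖ := mul_le_mul_of_nonneg_left (hL_norm m) (norm_nonneg _)
      _ ≤ (1 + ‖V m‖) * ‖Ψ (V m)‖ := by nlinarith [norm_nonneg (Ψ (V m)), norm_nonneg (V m)]
  have hf0 : Summable (fun m => F m k) := by
    refine Summable.of_norm_bounded hu fun m => ?_
    simp only [hF]
    rw [norm_mul, hexp_norm, one_mul]
    simp only [hu_def]
    nlinarith [norm_nonneg (Ψ (V m)), norm_nonneg (V m)]
  have key : HasFDerivAt (fun k' => ∑' m, F m k') (∑' m, F' m k) k :=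
    hasFDerivAt_tsum hu hderiv hf'le hf0 k
  have hsum' : Summable (fun m => F' m k) :=
    Summable.of_norm_bounded hu fun m => hf'le m k
  have hfd : fderiv ℝ (fun k' => zak (⇑b) Ψ k' y) k = ∑' m, F' m k := by
    have hzak : (fun k' => zak (⇑b) Ψ k' y) = fun k' => ∑' m, F m k' := rfl
    rw [hzak]
    exact key.fderiv
  have happ : (∑' m, F' m k) w = ∑' m, (F' m k) w := by
    have := (ContinuousLinearMap.apply ℝ ℂ w).map_tsum hsum'
    simpa using this
  have hterm : ∀ m : Fin d → ℤ, Complex.I * ((F' m k) w)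
      = Complex.exp (-Complex.I * ((⟪k, V m⟫ : ℝ) : ℂ)) * Φ (V m) := by
    intro m
    have h1 : (Complex.ofRealCLM.comp (innerSL ℝ (V m))) w = ((V m j : ℝ) : ℂ) := by
      rw [hLfun m w]
      norm_cast
      rw [hw]
      simpa using (EuclideanSpace.inner_single_left (𝕜 := ℝ) j 1 (V m))
    rw [hΦ (V m)]
    simp only [hF', ContinuousLinearMap.smul_apply, smul_eq_mul]
    rw [h1]
    have hI : Complex.I * Complex.I = -1 := Complex.I_mul_I
    linear_combination (-(Complex.exp (-Complex.I * ((⟪k, V m⟫ : ℝ) : ℂ)) *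
      ((V m j : ℝ) : ℂ) * Ψ (V m))) * hI
  calc zak (⇑b) Φ k y
      = ∑' m, Complex.exp (-Complex.I * ((⟪k, V m⟫ : ℝ) : ℂ)) * Φ (V m) := rfl
    _ = ∑' m, Complex.I * ((F' m k) w) := by
        exact tsum_congr fun m => (hterm m).symm
    _ = Complex.I * ∑' m, (F' m k) w := tsum_mul_left
    _ = Complex.I * (∑' m, F' m k) w := by rw [happ]
    _ = Complex.I * fderiv ℝ (fun k' => zak (⇑b) Ψ k' y) k w := by rw [hfd]
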